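/- For every integer j ≥ 1 and every t with r_{j−1} ≤ t ≤ r_j, one has h_j(t) ≥ L/(2·e^L). -/

import Mathlib

/-- For every integer `j ≥ 1` and every `t` with `r_(j-1) ≤ t ≤ r_j`, one has
`h_j t ≥ L / (2 * exp L)`, where `h_j t = (j / log (j+1)) * t^(j-1) * (1-t) * log (3/(1-t))`,
`r_0 = 0`, `r_j = 1 - L/(j+L)` for `j ≥ 1`, and `L = 1 - 1/log 3`. -/
theorem stmt_3 (L : ℝ) (hL : L = 1 - 1 / Real.log 3)
    (r : ℕ → ℝ) (hr0 : r 0 = 0) (hr : ∀ j : ℕ, 1 ≤ j → r j = 1 - L / (j + L))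
    (j : ℕ) (hj : 1 ≤ j) :
    ∀ t : ℝ, r (j - 1) ≤ t → t ≤ r j →
      L / (2 * Real.exp L) ≤
      ((j : ℝ) / Real.log ((j : ℝ) + 1)) * t ^ (j - 1) * (1 - t) * Real.log (3 / (1 - t)) := by
  intro t ht1 ht2
  have h3 : (1:ℝ) < Real.log 3 := by
    rw [show (1:ℝ) = Real.log (Real.exp 1) by simp]
    apply Real.log_lt_log (Real.exp_pos 1)
    calc Real.exp 1 ≤ 2.7182818286 := Real.exp_one_lt_d9.le
      _ < 3 := by norm_num
  have hL0 : 0 < L := by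
    have h1 : 1 / Real.log 3 < 1 := by
      rw [div_lt_one (by linarith)]; exact h3
    rw [hL]; linarith
  have hL1 : L < 1 := by
    have h1 : 0 < 1 / Real.log 3 := one_div_pos.mpr (by linarith)
    rw [hL]; linarith
  have hexp1 : (1:ℝ) ≤ Real.exp L := Real.one_le_exp hL0.le
  obtain ⟨k, rfl⟩ := Nat.exists_eq_add_of_le hj
  have hsub : 1 + k - 1 = k := by omega
  rw [hsub] at ht1 ⊢
  rcases Nat.eq_zero_or_pos k with hk | hk
  · -- case j = 1
    subst hk
    rw [hr0] at ht1
    rw [hr (1 + 0) le_rfl] at ht2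
    push_cast at ht2 ⊢
    norm_num at ht2 ⊢
    -- ht2 : t ≤ 1 - L / (1 + L)
    have h1L : (0:ℝ) < 1 + L := by linarith
    have hu1 : L / (1 + L) ≤ 1 - t := by linarith
    have hu0 : 0 < 1 - t := lt_of_lt_of_le (by positivity) hu1
    have hu2 : 1 - t ≤ 1 := by linarith
    have hlog2 : 0 < Real.log 2 := Real.log_pos (by norm_num)
    have hlog2' : Real.log 2 ≤ 1 := by
      calc Real.log 2 ≤ 0.6931471808 := Real.log_two_lt_d9.le
        _ ≤ 1 := by norm_num
    have hΛ : 1 ≤ Real.log (3 / (1 - t)) := by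
      have h33 : (3:ℝ) ≤ 3 / (1 - t) := by
        rw [le_div_iff₀ hu0]; nlinarith
      calc (1:ℝ) ≤ Real.log 3 := h3.le
        _ ≤ Real.log (3 / (1 - t)) := Real.log_le_log (by norm_num) h33
    have hlhalf : L / 2 ≤ 1 - t := by
      have : L / 2 ≤ L / (1 + L) := by
        rw [div_le_div_iff₀ (by norm_num) h1L]; nlinarith
      linarith
    have h1div : (1:ℝ) ≤ 1 / Real.log 2 := by
      rw [le_div_iff₀ hlog2]; linarith
    calc L / (2 * Real.exp L) ≤ L / 2 := by
          gcongr
          · nlinarith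
      _ = 1 * (L / 2) * 1 := by ring
      _ ≤ (Real.log 2)⁻¹ * (1 - t) * Real.log (3 / (1 - t)) := by
          have h1div' : (1:ℝ) ≤ (Real.log 2)⁻¹ := by rw [← one_div]; exact h1div
          gcongr
  · -- case j = 1 + k, k ≥ 1
    have hk1 : (1:ℝ) ≤ (k:ℝ) := by exact_mod_cast hk
    have hkne : (k:ℝ) ≠ 0 := by positivity
    rw [hr k hk] at ht1
    rw [hr (1 + k) (by omega)] at ht2
    push_cast at ht1 ht2 ⊢
    have hkL : 0 < (k:ℝ) + L := by linarith
    have hkL1 : 0 < 1 + (k:ℝ) + L := by linarith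
    have hu_lo : L / (1 + (k:ℝ) + L) ≤ 1 - t := by linarith
    have hu_hi : 1 - t ≤ L / ((k:ℝ) + L) := by linarith
    have hu0 : 0 < 1 - t := lt_of_lt_of_le (by positivity) hu_lo
    have ht0 : 0 ≤ t := by
      have : L / ((k:ℝ) + L) ≤ 1 := by
        rw [div_le_one hkL]; linarith
      linarith
    -- Step A : exp (-L) ≤ t ^ k
    have htk : Real.exp (-L) ≤ t ^ k := by
      have hbase : (1 + L / (k:ℝ)) ≤ Real.exp (L / (k:ℝ)) := by
        have := Real.add_one_le_exp (L / (k:ℝ)); linarith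
      have hpow : (1 + L / (k:ℝ)) ^ k ≤ Real.exp L := by
        calc (1 + L / (k:ℝ)) ^ k ≤ (Real.exp (L / (k:ℝ))) ^ k := by
              apply pow_le_pow_left₀ (by positivity) hbase
          _ = Real.exp L := by
              rw [← Real.exp_nat_mul]
              congr 1
              field_simp
      have hrt : (k:ℝ) / ((k:ℝ) + L) ≤ t := by
        have heq : 1 - L / ((k:ℝ) + L) = (k:ℝ) / ((k:ℝ) + L) := by
          field_simp
          ring
        linarith [heq ▸ ht1]
      have h1 : Real.exp (-L) ≤ ((k:ℝ) / ((k:ℝ) + L)) ^ k := by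
        rw [Real.exp_neg]
        have hy : (0:ℝ) < ((k:ℝ) / ((k:ℝ) + L)) ^ k := by positivity
        rw [inv_le_comm₀ (Real.exp_pos L) hy] at *
        rw [← inv_pow, inv_div]
        calc (((k:ℝ) + L) / k) ^ k = (1 + L / (k:ℝ)) ^ k := by
              congr 1; field_simp
          _ ≤ Real.exp L := hpow
      calc Real.exp (-L) ≤ ((k:ℝ) / ((k:ℝ) + L)) ^ k := h1
        _ ≤ t ^ k := by
            apply pow_le_pow_left₀ (by positivity) hrt
    -- Step B : log (k+2) ≤ log (3/(1-t))
    have hG0 : 0 < Real.log (1 + (k:ℝ) + 1) := Real.log_pos (by linarith)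
    have hΛ : Real.log (1 + (k:ℝ) + 1) ≤ Real.log (3 / (1 - t)) := by
      apply Real.log_le_log (by linarith)
      rw [le_div_iff₀ hu0]
      have hkLk : (k:ℝ) * L ≤ (k:ℝ) := by nlinarith
      have hB : (1 + (k:ℝ) + 1) * (L / ((k:ℝ) + L)) ≤ 3 := by
        rw [← mul_div_assoc, div_le_iff₀ hkL]
        nlinarith
      calc (1 + (k:ℝ) + 1) * (1 - t) ≤ (1 + (k:ℝ) + 1) * (L / ((k:ℝ) + L)) := by
            gcongr
        _ ≤ 3 := hB
    -- Step C : combine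
    have hhalf : L / (2 * Real.exp L) ≤ (1 + (k:ℝ)) * (L / (1 + (k:ℝ) + L)) * Real.exp (-L) := by
      rw [Real.exp_neg, ← div_eq_mul_inv, div_mul_eq_div_div]
      gcongr
      rw [← mul_div_assoc, le_div_iff₀ hkL1]
      nlinarith
    calc L / (2 * Real.exp L)
        ≤ (1 + (k:ℝ)) * (L / (1 + (k:ℝ) + L)) * Real.exp (-L) := hhalf
      _ = ((1 + (k:ℝ)) / Real.log (1 + (k:ℝ) + 1)) * Real.exp (-L) * (L / (1 + (k:ℝ) + L))
            * Real.log (1 + (k:ℝ) + 1) := by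
          field_simp
      _ ≤ ((1 + (k:ℝ)) / Real.log (1 + (k:ℝ) + 1)) * t ^ k * (1 - t) * Real.log (3 / (1 - t)) := by
          gcongr
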